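/- Let μ be a valuation on K[x] extending v, φ a key polynomial for μ, and γ ∈ Λ∞ with μ(φ) < γ. Define μ' on K[x] by μ'(f) = min_s { μ(a_s) + sγ } where f = Σ_s a_s φ^s is the φ-expansion of f. Then μ' is a valuation on K[x]: μ'(fg) = μ'(f) + μ'(g) and μ'(f+g) ≥ min{μ'(f), μ'(g)} for all f,g ∈ K[x]. -/

import Mathlib

open Polynomial Finset

variable {K : Type*} [Field K] {Λ : Type*} [AddCommGroup Λ] [LinearOrder Λ] [IsOrderedAddMonoid Λ]

/-- `v` is a valuation on the field `K` with values in `Λ∞ = WithTop Λ`. -/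
def IsVal (v : K → WithTop Λ) : Prop :=
  (∀ a, v a = ⊤ ↔ a = 0) ∧ v 1 = 0 ∧ (∀ a b, v (a * b) = v a + v b) ∧
    (∀ a b, min (v a) (v b) ≤ v (a + b))

/-- `μ` is a valuation on `K[x]` extending `v`. -/
def ExtVal (v : K → WithTop Λ) (μ : Polynomial K → WithTop Λ) : Prop :=
  (∀ f g, μ (f * g) = μ f + μ g) ∧ (∀ f g, min (μ f) (μ g) ≤ μ (f + g)) ∧
    (∀ a, μ (Polynomial.C a) = v a)

/-- `h` divides `g` μ-equivalently (`h ∣_μ g`): there is `q` with `μ(g - q h) > μ(g)`. -/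
def MuDvd (μ : Polynomial K → WithTop Λ) (h g : Polynomial K) : Prop :=
  ∃ q : Polynomial K, μ g < μ (g - q * h)

/-- `φ` is μ-minimal: `φ ∤_μ f` for every nonzero `f` of degree less than `deg φ`. -/
def MuMinimal (μ : Polynomial K → WithTop Λ) (φ : Polynomial K) : Prop :=
  ∀ f : Polynomial K, f ≠ 0 → f.degree < φ.degree → ¬ MuDvd μ φ f

/-- `φ` is μ-irreducible: the principal ideal generated by `in_μ φ` in the graded
algebra is a nonzero prime ideal (stated via μ-divisibility). -/
def MuIrreducible (μ : Polynomial K → WithTop Λ) (φ : Polynomial K) : Prop :=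
  μ φ ≠ ⊤ ∧ ¬ MuDvd μ φ 1 ∧
    ∀ f g : Polynomial K, MuDvd μ φ (f * g) → MuDvd μ φ f ∨ MuDvd μ φ g

/-- A (MacLane–Vaquié) key polynomial for `μ`. -/
def KeyPoly (μ : Polynomial K → WithTop Λ) (φ : Polynomial K) : Prop :=
  φ.Monic ∧ MuMinimal μ φ ∧ MuIrreducible μ φ

/-- `μ'` is the augmented valuation `[μ; φ, γ]`: on φ-expansions
`f = Σ a_s φ^s` (with `deg a_s < deg φ`), `μ' f = min_s (μ(a_s) + s·γ)`. -/
def AugVal (μ : Polynomial K → WithTop Λ) (φ : Polynomial K) (γ : WithTop Λ)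
    (μ' : Polynomial K → WithTop Λ) : Prop :=
  ∀ (f : Polynomial K) (n : ℕ) (a : ℕ → Polynomial K),
    (∀ s, (a s).degree < φ.degree) →
    f = ∑ s ∈ Finset.range n, a s * φ ^ s →
    μ' f = (Finset.range n).inf fun s => μ (a s) + s • γ

section Aux

variable {v : K → WithTop Λ} {μ : Polynomial K → WithTop Λ} {φ : Polynomial K}
  {γ : WithTop Λ} {μ' : Polynomial K → WithTop Λ}

lemma muZero (hv : IsVal v) (hμ : ExtVal v μ) : μ 0 = ⊤ := by
  have h := hμ.2.2 0
  rw [Polynomial.C_0] at h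
  rw [h, (hv.1 0).mpr rfl]

lemma muOne (hv : IsVal v) (hμ : ExtVal v μ) : μ 1 = 0 := by
  have h := hμ.2.2 1
  rw [Polynomial.C_1] at h
  rw [h, hv.2.1]

lemma muNeg (hv : IsVal v) (hμ : ExtVal v μ) (g : Polynomial K) : μ (-g) = μ g := by
  have hv1 : v (-1) = 0 := by
    have h : v (-1) + v (-1) = 0 := by
      have h := hv.2.2.1 (-1) (-1)
      rw [show ((-1 : K) * (-1) = 1) from by ring, hv.2.1] at h
      exact h.symm
    have hne : v (-1) ≠ ⊤ := by
      intro ht; rw [ht, top_add] at h; exact WithTop.zero_ne_top h.symm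
    lift v (-1) to Λ using hne with x hx
    have hx2 : x + x = 0 := by exact_mod_cast h
    have hx0 : x = 0 := by
      rcases lt_trichotomy x 0 with h1 | h1 | h1
      · have := add_lt_add h1 h1; rw [add_zero] at this; exact absurd hx2 (ne_of_lt this)
      · exact h1
      · have := add_lt_add h1 h1; rw [add_zero] at this; exact absurd hx2 (ne_of_gt this)
    rw [hx0]; rfl
  have hg : (-g) = Polynomial.C (-1) * g := by
    rw [map_neg, Polynomial.C_1, neg_one_mul]
  rw [hg, hμ.1, hμ.2.2, hv1, zero_add]

/-- strict ultrametric equality -/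
lemma muAddEq (hv : IsVal v) (hμ : ExtVal v μ) {f g : Polynomial K} (h : μ f < μ g) :
    μ (f + g) = μ f := by
  refine le_antisymm ?_ ?_
  · have h2 := hμ.2.1 (f + g) (-g)
    rw [add_neg_cancel_right, muNeg hv hμ] at h2
    rcases le_total (μ (f + g)) (μ g) with hle | hle
    · calc μ (f + g) = min (μ (f + g)) (μ g) := (min_eq_left hle).symm
        _ ≤ μ f := h2
    · exact absurd (le_trans (by rw [min_eq_right hle]) h2) (not_le.mpr h)
  · have := hμ.2.1 f g
    rwa [min_eq_left h.le] at this

lemma leMuSum (hv : IsVal v) (hμ : ExtVal v μ) {ι : Type*} (S : Finset ι)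
    (F : ι → Polynomial K) (w α : WithTop Λ) (h : ∀ x ∈ S, α ≤ μ (F x) + w) :
    α ≤ μ (∑ x ∈ S, F x) + w := by
  classical
  induction S using Finset.cons_induction with
  | empty => simp [muZero hv hμ]
  | cons x S hx IH =>
    rw [Finset.sum_cons]
    calc α ≤ min (μ (F x) + w) (μ (∑ y ∈ S, F y) + w) := by
          exact le_min (h x (Finset.mem_cons_self x S)) (IH fun y hy => h y (Finset.mem_cons_of_mem hy))
      _ = min (μ (F x)) (μ (∑ y ∈ S, F y)) + w := min_add_add_right _ _ _
      _ ≤ μ (F x + ∑ y ∈ S, F y) + w := add_le_add_left (hμ.2.1 _ _) _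

lemma ltMuSum (hv : IsVal v) (hμ : ExtVal v μ) {ι : Type*} (S : Finset ι)
    (F : ι → Polynomial K) (w : WithTop Λ) {α : WithTop Λ} (hα : α ≠ ⊤)
    (h : ∀ x ∈ S, α < μ (F x) + w) :
    α < μ (∑ x ∈ S, F x) + w := by
  classical
  induction S using Finset.cons_induction with
  | empty => simpa [muZero hv hμ] using lt_top_iff_ne_top.mpr hα
  | cons x S hx IH =>
    rw [Finset.sum_cons]
    calc α < min (μ (F x) + w) (μ (∑ y ∈ S, F y) + w) := by
          exact lt_min (h x (Finset.mem_cons_self x S)) (IH fun y hy => h y (Finset.mem_cons_of_mem hy))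
      _ = min (μ (F x)) (μ (∑ y ∈ S, F y)) + w := min_add_add_right _ _ _
      _ ≤ μ (F x + ∑ y ∈ S, F y) + w := add_le_add_left (hμ.2.1 _ _) _

end Aux
section Aux2

variable {v : K → WithTop Λ} {μ : Polynomial K → WithTop Λ} {φ : Polynomial K}
  {γ : WithTop Λ} {μ' : Polynomial K → WithTop Λ}

/-- the support of μ is trivial: μ g = ⊤ implies g = 0 -/
lemma muTopIff (hv : IsVal v) (hμ : ExtVal v μ) (hφ : KeyPoly μ φ) :
    ∀ g : Polynomial K, μ g = ⊤ → g = 0 := by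
  classical
  have hφne : φ ≠ 0 := hφ.1.ne_zero
  suffices H : ∀ n : ℕ, ∀ g : Polynomial K, g.natDegree = n → μ g = ⊤ → g = 0 by
    exact fun g => H g.natDegree g rfl
  intro n
  induction n using Nat.strong_induction_on with
  | _ n IH =>
    intro g hn htop
    by_contra hg0
    by_cases hc : IsCoprime φ g
    · obtain ⟨u, w, huw⟩ := hc
      refine hφ.2.2.2.1 ⟨u, ?_⟩
      have h1 : (1 : Polynomial K) - u * φ = w * g := by linear_combination -huw
      rw [h1, hμ.1, htop, add_top, muOne hv hμ]
      exact WithTop.zero_ne_top.lt_top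
    · set d := EuclideanDomain.gcd φ g with hd
      have hdu : ¬ IsUnit d := fun h => hc (EuclideanDomain.gcd_isUnit_iff.mp h)
      have hdφ : d ∣ φ := EuclideanDomain.gcd_dvd_left φ g
      have hdg : d ∣ g := EuclideanDomain.gcd_dvd_right φ g
      have hd0 : d ≠ 0 := fun h => hφne (by simpa [h] using hdφ)
      obtain ⟨e, he⟩ := hdg
      have he0 : e ≠ 0 := fun h => hg0 (by simp [he, h])
      have hde : μ d + μ e = ⊤ := by rw [← hμ.1, ← he, htop]
      rcases WithTop.add_eq_top.mp hde with hdt | het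
      · obtain ⟨d', hd'⟩ := hdφ
        exact hφ.2.2.1 (by rw [hd', hμ.1, hdt, top_add])
      · have hnd : d.natDegree ≠ 0 := by
          intro h0
          obtain ⟨c, hc'⟩ := Polynomial.natDegree_eq_zero.mp h0
          have : c ≠ 0 := fun h => hd0 (by simp [← hc', h])
          exact hdu (by rw [← hc']; exact Polynomial.isUnit_C.mpr (IsUnit.mk0 c this))
        have hdeg : e.natDegree < n := by
          have := Polynomial.natDegree_mul hd0 he0
          rw [← he, hn] at this
          omega
        exact he0 (IH e.natDegree hdeg e rfl het)

/-- division bound: μ c ≤ μ(φ * (c /ₘ φ)) and μ c ≤ μ(c %ₘ φ) -/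
lemma divBound (hv : IsVal v) (hμ : ExtVal v μ) (hφ : KeyPoly μ φ) (c : Polynomial K) :
    μ c ≤ μ φ + μ (c /ₘ φ) ∧ μ c ≤ μ (c %ₘ φ) := by
  have hdecomp : c %ₘ φ + φ * (c /ₘ φ) = c := Polynomial.modByMonic_add_div c φ
  have h1 : μ c ≤ μ (φ * (c /ₘ φ)) := by
    by_contra hlt
    push_neg at hlt
    have hr : μ (c %ₘ φ) = μ (φ * (c /ₘ φ)) := by
      have : c %ₘ φ = -(φ * (c /ₘ φ)) + c := by linear_combination hdecomp
      rw [this, muAddEq hv hμ (by rwa [muNeg hv hμ]), muNeg hv hμ]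
    have hrne : c %ₘ φ ≠ 0 := by
      intro h0
      rw [h0, muZero hv hμ] at hr
      exact absurd (hr ▸ hlt) (by simp)
    refine hφ.2.1 (c %ₘ φ) hrne (Polynomial.degree_modByMonic_lt c hφ.1) ⟨-(c /ₘ φ), ?_⟩
    have : c %ₘ φ - (-(c /ₘ φ)) * φ = c := by linear_combination hdecomp
    rw [this, hr]
    exact hlt
  constructor
  · rwa [hμ.1] at h1
  · have : c %ₘ φ = -(φ * (c /ₘ φ)) + c := by linear_combination hdecomp
    rw [this]
    calc μ c ≤ min (μ (-(φ * (c /ₘ φ)))) (μ c) := by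
          rw [muNeg hv hμ]; exact le_min h1 le_rfl
      _ ≤ μ (-(φ * (c /ₘ φ)) + c) := hμ.2.1 _ _

/-- if φ does not μ-divide c then the remainder has the same value -/
lemma modEq (hv : IsVal v) (hμ : ExtVal v μ) (hφ : KeyPoly μ φ) {c : Polynomial K}
    (hnd : ¬ MuDvd μ φ c) : μ (c %ₘ φ) = μ c := by
  refine le_antisymm ?_ (divBound hv hμ hφ c).2
  by_contra hlt
  push_neg at hlt
  refine hnd ⟨c /ₘ φ, ?_⟩
  have : c - (c /ₘ φ) * φ = c %ₘ φ := by
    linear_combination -Polynomial.modByMonic_add_div c φ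
  rwa [this]

/-- φ does not μ-divide a product of nonzero polynomials of degree < deg φ -/
lemma notDvdMul (hμ : ExtVal v μ) (hφ : KeyPoly μ φ) {a b : Polynomial K}
    (ha : a ≠ 0) (hb : b ≠ 0) (hda : a.degree < φ.degree) (hdb : b.degree < φ.degree) :
    ¬ MuDvd μ φ (a * b) := by
  intro h
  rcases hφ.2.2.2.2 a b h with h' | h'
  · exact hφ.2.1 a ha hda h'
  · exact hφ.2.1 b hb hdb h'

/-- transfer of non-μ-divisibility along μ-equivalence -/
lemma muDvdOfClose (hv : IsVal v) (hμ : ExtVal v μ) {x y : Polynomial K}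
    (hclose : μ x < μ (y - x)) (heq : μ y = μ x) :
    MuDvd μ φ y → MuDvd μ φ x := by
  rintro ⟨q, hq⟩
  refine ⟨q, ?_⟩
  have hx : x - q * φ = (y - q * φ) + -(y - x) := by ring
  rw [hx]
  calc μ x < min (μ (y - q * φ)) (μ (-(y - x))) := by
        rw [muNeg hv hμ]; exact lt_min (heq ▸ hq) hclose
    _ ≤ μ ((y - q * φ) + -(y - x)) := hμ.2.1 _ _

end Aux2
section Aux3

variable {v : K → WithTop Λ} {μ : Polynomial K → WithTop Λ} {φ : Polynomial K}
  {γ : WithTop Λ} {μ' : Polynomial K → WithTop Λ}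

/-- every polynomial has a φ-adic expansion, encoded as a polynomial over K[x] -/
lemma existsExpansion (hφm : φ.Monic) (hdeg : 0 < φ.degree) (f : Polynomial K) :
    ∃ P : Polynomial (Polynomial K),
      (∀ s, (P.coeff s).degree < φ.degree) ∧ Polynomial.eval φ P = f := by
  suffices H : ∀ n : ℕ, ∀ f : Polynomial K, f.natDegree = n →
      ∃ P : Polynomial (Polynomial K),
        (∀ s, (P.coeff s).degree < φ.degree) ∧ Polynomial.eval φ P = f by
    exact H f.natDegree f rfl
  intro n
  induction n using Nat.strong_induction_on with
  | _ n IH =>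
    intro f hn
    by_cases hlt : f.degree < φ.degree
    · refine ⟨Polynomial.C f, fun s => ?_, Polynomial.eval_C⟩
      rcases Nat.eq_zero_or_pos s with hs | hs
      · simpa [hs] using hlt
      · rw [Polynomial.coeff_C, if_neg (Nat.pos_iff_ne_zero.mp hs)]
        exact lt_of_le_of_lt (by simp) hdeg
    · push_neg at hlt
      have hf0 : f ≠ 0 := by
        intro h0
        rw [h0, Polynomial.degree_zero] at hlt
        exact absurd (lt_of_lt_of_le hdeg hlt) (by simp)
      have hq0 : f /ₘ φ ≠ 0 := fun h =>
        absurd ((Polynomial.divByMonic_eq_zero_iff hφm).mp h) (not_lt.mpr hlt)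
      have hqd : (f /ₘ φ).natDegree < n := by
        rw [← hn]
        exact Polynomial.natDegree_lt_natDegree hq0
          (Polynomial.degree_divByMonic_lt f φ hf0 hdeg)
      obtain ⟨Q, hQd, hQe⟩ := IH _ hqd (f /ₘ φ) rfl
      refine ⟨Polynomial.C (f %ₘ φ) + Polynomial.X * Q, fun s => ?_, ?_⟩
      · rcases Nat.eq_zero_or_pos s with hs | hs
        · subst hs
          simpa using Polynomial.degree_modByMonic_lt f hφm
        · obtain ⟨t, rfl⟩ := Nat.exists_eq_add_of_lt hs
          rw [Polynomial.coeff_add, Polynomial.coeff_C, if_neg (by omega),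
            zero_add, show 0 + t + 1 = t + 1 by omega, Polynomial.coeff_X_mul]
          exact hQd t
      · rw [Polynomial.eval_add, Polynomial.eval_C, Polynomial.eval_mul,
          Polynomial.eval_X, hQe]
        exact Polynomial.modByMonic_add_div f φ

/-- value of μ' on the evaluation of an encoded expansion -/
lemma muEval (haug : AugVal μ φ γ μ') (P : Polynomial (Polynomial K))
    (hP : ∀ s, (P.coeff s).degree < φ.degree) {n : ℕ} (hn : P.natDegree < n) :
    μ' (Polynomial.eval φ P) = (Finset.range n).inf fun s => μ (P.coeff s) + s • γ :=
  haug _ n P.coeff hP (Polynomial.eval_eq_sum_range' hn φ)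

lemma muLeCoeff (hv : IsVal v) (hμ : ExtVal v μ) (haug : AugVal μ φ γ μ')
    (P : Polynomial (Polynomial K)) (hP : ∀ s, (P.coeff s).degree < φ.degree) (s : ℕ) :
    μ' (Polynomial.eval φ P) ≤ μ (P.coeff s) + s • γ := by
  rw [muEval haug P hP (n := max (P.natDegree + 1) (s + 1)) (by omega)]
  exact Finset.inf_le (Finset.mem_range.mpr (by omega))

end Aux3
section Aux4

variable {v : K → WithTop Λ} {μ : Polynomial K → WithTop Λ} {φ : Polynomial K}
  {γ : WithTop Λ} {μ' : Polynomial K → WithTop Λ}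

lemma coeffMulDegLt {P Q : Polynomial (Polynomial K)} (hφne : φ ≠ 0)
    (hP : ∀ s, (P.coeff s).degree < φ.degree) (hQ : ∀ s, (Q.coeff s).degree < φ.degree)
    (u : ℕ) : ((P * Q).coeff u).degree < φ.degree + φ.degree := by
  have hb : φ.degree ≠ ⊥ := Polynomial.degree_ne_bot.mpr hφne
  have hbb : (⊥ : WithBot ℕ) < φ.degree + φ.degree := by
    rw [bot_lt_iff_ne_bot, Ne, WithBot.add_eq_bot, not_or]
    exact ⟨hb, hb⟩
  rw [Polynomial.coeff_mul]
  refine lt_of_le_of_lt (Polynomial.degree_sum_le _ _) ?_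
  rw [Finset.sup_lt_iff hbb]
  intro p _
  refine lt_of_le_of_lt (Polynomial.degree_mul_le _ _) ?_
  exact (add_le_add (le_refl _) (hQ p.2).le).trans_lt (WithBot.add_lt_add_right hb (hP p.1))

lemma divDegLt {c : Polynomial K} (hφm : φ.Monic)
    (hc : c.degree < φ.degree + φ.degree) : (c /ₘ φ).degree < φ.degree := by
  have hφne : φ ≠ 0 := hφm.ne_zero
  have hb : φ.degree ≠ ⊥ := Polynomial.degree_ne_bot.mpr hφne
  by_cases hlt : c.degree < φ.degree
  · rw [(Polynomial.divByMonic_eq_zero_iff hφm).mpr hlt, Polynomial.degree_zero]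
    exact bot_lt_iff_ne_bot.mpr hb
  · push_neg at hlt
    have := Polynomial.degree_add_divByMonic hφm hlt
    rw [← this] at hc
    exact lt_of_add_lt_add_left hc

lemma prodExpansion (hφm : φ.Monic) {P Q : Polynomial (Polynomial K)} :
    Polynomial.eval φ P * Polynomial.eval φ Q =
      ∑ u ∈ Finset.range ((P * Q).natDegree + 2),
        ((P * Q).coeff u %ₘ φ +
          (if u = 0 then 0 else (P * Q).coeff (u - 1) /ₘ φ)) * φ ^ u := by
  set PQ := P * Q with hPQ
  set M := PQ.natDegree with hM
  have heval : Polynomial.eval φ P * Polynomial.eval φ Q =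
      ∑ u ∈ Finset.range (M + 1), PQ.coeff u * φ ^ u := by
    rw [← Polynomial.eval_mul, ← hPQ]
    exact Polynomial.eval_eq_sum_range' (by omega) φ
  rw [heval]
  have hsplit : ∀ u ∈ Finset.range (M + 2),
      ((PQ.coeff u %ₘ φ) + (if u = 0 then 0 else PQ.coeff (u - 1) /ₘ φ)) * φ ^ u =
        (PQ.coeff u %ₘ φ) * φ ^ u +
          (if u = 0 then 0 else PQ.coeff (u - 1) /ₘ φ) * φ ^ u := fun u _ => add_mul _ _ _
  rw [Finset.sum_congr rfl hsplit, Finset.sum_add_distrib]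
  have h1 : ∑ u ∈ Finset.range (M + 2), (PQ.coeff u %ₘ φ) * φ ^ u =
      ∑ u ∈ Finset.range (M + 1), (PQ.coeff u %ₘ φ) * φ ^ u := by
    rw [Finset.sum_range_succ (n := M + 1)]
    have : PQ.coeff (M + 1) = 0 := Polynomial.coeff_eq_zero_of_natDegree_lt (by omega)
    rw [this, Polynomial.zero_modByMonic, zero_mul, add_zero]
  have h2 : ∑ u ∈ Finset.range (M + 2),
      (if u = 0 then 0 else PQ.coeff (u - 1) /ₘ φ) * φ ^ u =
      ∑ u ∈ Finset.range (M + 1), (PQ.coeff u /ₘ φ) * φ ^ (u + 1) := by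
    rw [Finset.sum_range_succ' (fun u => (if u = 0 then 0 else PQ.coeff (u - 1) /ₘ φ) * φ ^ u) (M + 1)]
    simp
  rw [h1, h2, ← Finset.sum_add_distrib]
  refine Finset.sum_congr rfl fun u _ => ?_
  have : PQ.coeff u %ₘ φ * φ ^ u + PQ.coeff u /ₘ φ * φ ^ (u + 1) =
      (PQ.coeff u %ₘ φ + φ * (PQ.coeff u /ₘ φ)) * φ ^ u := by ring
  rw [this, Polynomial.modByMonic_add_div _ φ]

end Aux4
section Aux5

variable {v : K → WithTop Λ} {μ : Polynomial K → WithTop Λ} {φ : Polynomial K}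
  {γ : WithTop Λ} {μ' : Polynomial K → WithTop Λ}

lemma coeffBound (hv : IsVal v) (hμ : ExtVal v μ) (haug : AugVal μ φ γ μ')
    {P Q : Polynomial (Polynomial K)}
    (hP : ∀ s, (P.coeff s).degree < φ.degree) (hQ : ∀ s, (Q.coeff s).degree < φ.degree)
    (u : ℕ) :
    μ' (Polynomial.eval φ P) + μ' (Polynomial.eval φ Q) ≤ μ ((P * Q).coeff u) + u • γ := by
  rw [Polynomial.coeff_mul]
  refine leMuSum hv hμ _ _ _ _ fun p hp => ?_
  have hpu : p.1 + p.2 = u := Finset.HasAntidiagonal.mem_antidiagonal.mp hp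
  rw [hμ.1, ← hpu, add_nsmul, add_add_add_comm]
  exact add_le_add (muLeCoeff hv hμ haug P hP p.1) (muLeCoeff hv hμ haug Q hQ p.2)

lemma expDegLt (hv : IsVal v) (hμ : ExtVal v μ) (hφ : KeyPoly μ φ)
    {P Q : Polynomial (Polynomial K)}
    (hP : ∀ s, (P.coeff s).degree < φ.degree) (hQ : ∀ s, (Q.coeff s).degree < φ.degree)
    (u : ℕ) :
    (((P * Q).coeff u %ₘ φ) +
      (if u = 0 then 0 else (P * Q).coeff (u - 1) /ₘ φ)).degree < φ.degree := by
  have hφne : φ ≠ 0 := hφ.1.ne_zero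
  have hb : φ.degree ≠ ⊥ := Polynomial.degree_ne_bot.mpr hφne
  refine lt_of_le_of_lt (Polynomial.degree_add_le _ _) (max_lt ?_ ?_)
  · exact Polynomial.degree_modByMonic_lt _ hφ.1
  · rcases Nat.eq_zero_or_pos u with h0 | hpos
    · rw [if_pos h0, Polynomial.degree_zero]
      exact bot_lt_iff_ne_bot.mpr hb
    · rw [if_neg (Nat.pos_iff_ne_zero.mp hpos)]
      exact divDegLt hφ.1 (coeffMulDegLt hφne hP hQ (u - 1))

lemma mulGE (hv : IsVal v) (hμ : ExtVal v μ) (hφ : KeyPoly μ φ) (hγ : μ φ < γ)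
    (haug : AugVal μ φ γ μ') {P Q : Polynomial (Polynomial K)}
    (hP : ∀ s, (P.coeff s).degree < φ.degree) (hQ : ∀ s, (Q.coeff s).degree < φ.degree) :
    μ' (Polynomial.eval φ P) + μ' (Polynomial.eval φ Q) ≤
      μ' (Polynomial.eval φ P * Polynomial.eval φ Q) := by
  set a : ℕ → Polynomial K := fun u =>
    ((P * Q).coeff u %ₘ φ) + (if u = 0 then 0 else (P * Q).coeff (u - 1) /ₘ φ) with ha_def
  rw [haug _ ((P * Q).natDegree + 2) a (fun u => expDegLt hv hμ hφ hP hQ u)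
    (prodExpansion hφ.1)]
  refine Finset.le_inf fun u _ => ?_
  have hmin : min (μ ((P * Q).coeff u %ₘ φ))
      (μ (if u = 0 then 0 else (P * Q).coeff (u - 1) /ₘ φ)) ≤ μ (a u) := hμ.2.1 _ _
  calc μ' (Polynomial.eval φ P) + μ' (Polynomial.eval φ Q)
      ≤ min (μ ((P * Q).coeff u %ₘ φ) + u • γ)
          (μ (if u = 0 then 0 else (P * Q).coeff (u - 1) /ₘ φ) + u • γ) := by
        refine le_min ?_ ?_
        · exact le_trans (coeffBound hv hμ haug hP hQ u)
            (add_le_add_left (divBound hv hμ hφ _).2 _)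
        · rcases Nat.eq_zero_or_pos u with h0 | hpos
          · rw [if_pos h0, muZero hv hμ, top_add]
            exact le_top
          · rw [if_neg (Nat.pos_iff_ne_zero.mp hpos)]
            have hw : u = (u - 1) + 1 := by omega
            calc μ' (Polynomial.eval φ P) + μ' (Polynomial.eval φ Q)
                ≤ μ ((P * Q).coeff (u - 1)) + (u - 1) • γ := coeffBound hv hμ haug hP hQ _
              _ ≤ (μ φ + μ ((P * Q).coeff (u - 1) /ₘ φ)) + (u - 1) • γ :=
                  add_le_add_left (divBound hv hμ hφ _).1 _
              _ ≤ (γ + μ ((P * Q).coeff (u - 1) /ₘ φ)) + (u - 1) • γ :=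
                  add_le_add_left (add_le_add_left hγ.le _) _
              _ = μ ((P * Q).coeff (u - 1) /ₘ φ) + u • γ := by
                  rw [hw, succ_nsmul]; abel
    _ = min (μ ((P * Q).coeff u %ₘ φ))
          (μ (if u = 0 then 0 else (P * Q).coeff (u - 1) /ₘ φ)) + u • γ :=
        min_add_add_right _ _ _
    _ ≤ μ (a u) + u • γ := add_le_add_left hmin _

end Aux5
section Aux6

variable {v : K → WithTop Λ} {μ : Polynomial K → WithTop Λ} {φ : Polynomial K}
  {γ : WithTop Λ} {μ' : Polynomial K → WithTop Λ}

lemma existsMinIdx (hv : IsVal v) (hμ : ExtVal v μ) (haug : AugVal μ φ γ μ')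
    {P : Polynomial (Polynomial K)} (hP : ∀ s, (P.coeff s).degree < φ.degree) :
    ∃ s0, s0 ≤ P.natDegree ∧ μ (P.coeff s0) + s0 • γ = μ' (Polynomial.eval φ P) ∧
      ∀ s < s0, μ' (Polynomial.eval φ P) < μ (P.coeff s) + s • γ := by
  classical
  have he := muEval haug P hP (n := P.natDegree + 1) (by omega)
  set F : ℕ → WithTop Λ := fun s => μ (P.coeff s) + s • γ with hF
  set T := (Finset.range (P.natDegree + 1)).filter
    (fun s => F s = μ' (Polynomial.eval φ P)) with hT
  have hTne : T.Nonempty := by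
    obtain ⟨i, hi, hieq⟩ := Finset.exists_mem_eq_inf (Finset.range (P.natDegree + 1))
      ⟨0, Finset.mem_range.mpr (by omega)⟩ F
    exact ⟨i, Finset.mem_filter.mpr ⟨hi, by rw [he, hieq]⟩⟩
  have hmem := Finset.mem_filter.mp (T.min'_mem hTne)
  have hble : T.min' hTne ≤ P.natDegree := Nat.lt_succ_iff.mp (Finset.mem_range.mp hmem.1)
  refine ⟨T.min' hTne, hble, hmem.2, fun s hs => ?_⟩
  have hle : μ' (Polynomial.eval φ P) ≤ F s := muLeCoeff hv hμ haug P hP s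
  rcases lt_or_eq_of_le hle with h | h
  · exact h
  · exfalso
    have hsT : s ∈ T := Finset.mem_filter.mpr
      ⟨Finset.mem_range.mpr (by omega), h.symm⟩
    exact absurd (T.min'_le s hsT) (not_le.mpr hs)

lemma mulLE (hv : IsVal v) (hμ : ExtVal v μ) (hφ : KeyPoly μ φ) (hγ : μ φ < γ)
    (haug : AugVal μ φ γ μ') {P Q : Polynomial (Polynomial K)}
    (hP : ∀ s, (P.coeff s).degree < φ.degree) (hQ : ∀ s, (Q.coeff s).degree < φ.degree)
    (hft : μ' (Polynomial.eval φ P) ≠ ⊤) (hgt : μ' (Polynomial.eval φ Q) ≠ ⊤) :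
    μ' (Polynomial.eval φ P * Polynomial.eval φ Q) ≤
      μ' (Polynomial.eval φ P) + μ' (Polynomial.eval φ Q) := by
  classical
  have hφm := hφ.1
  have hφne : φ ≠ 0 := hφm.ne_zero
  set α := μ' (Polynomial.eval φ P) + μ' (Polynomial.eval φ Q) with hα
  have hαt : α ≠ ⊤ := by
    rw [hα, Ne, WithTop.add_eq_top]; push_neg; exact ⟨hft, hgt⟩
  obtain ⟨s0, hs0le, hs0eq, hs0min⟩ := existsMinIdx hv hμ haug hP
  obtain ⟨t0, ht0le, ht0eq, ht0min⟩ := existsMinIdx hv hμ haug hQ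
  have hμPt : μ (P.coeff s0) ≠ ⊤ := by
    intro h
    exact hft (by rw [← hs0eq, h, top_add])
  have hμQt : μ (Q.coeff t0) ≠ ⊤ := by
    intro h
    exact hgt (by rw [← ht0eq, h, top_add])
  have hPc0 : P.coeff s0 ≠ 0 := fun h => hμPt (by rw [h, muZero hv hμ])
  have hQc0 : Q.coeff t0 ≠ 0 := fun h => hμQt (by rw [h, muZero hv hμ])
  have hP0 : P ≠ 0 := fun h => hPc0 (by rw [h, Polynomial.coeff_zero])
  have hQ0 : Q ≠ 0 := fun h => hQc0 (by rw [h, Polynomial.coeff_zero])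
  set u0 := s0 + t0 with hu0def
  have hu0 : u0 < (P * Q).natDegree + 2 := by
    rw [Polynomial.natDegree_mul hP0 hQ0]; omega
  set a : ℕ → Polynomial K := fun u =>
    ((P * Q).coeff u %ₘ φ) + (if u = 0 then 0 else (P * Q).coeff (u - 1) /ₘ φ) with ha_def
  rw [haug _ ((P * Q).natDegree + 2) a (fun u => expDegLt hv hμ hφ hP hQ u)
    (prodExpansion hφm)]
  set main := P.coeff s0 * Q.coeff t0 with hmain
  set co := (P * Q).coeff u0 with hco_def
  have hβα : μ main + u0 • γ = α := by
    rw [hmain, hμ.1, hu0def, add_nsmul, add_add_add_comm, hs0eq, ht0eq, hα]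
  have hu0γ : (u0 : ℕ) • γ ≠ ⊤ := fun h => hαt (by rw [← hβα, h, add_top])
  have hmainT : μ main ≠ ⊤ := fun h => hαt (by rw [← hβα, h, top_add])
  have hmem : (s0, t0) ∈ Finset.HasAntidiagonal.antidiagonal u0 := Finset.HasAntidiagonal.mem_antidiagonal.mpr rfl
  have hrest : α < μ (co - main) + u0 • γ := by
    have hsplit := Finset.sum_erase_add (Finset.HasAntidiagonal.antidiagonal u0)
      (fun p => P.coeff p.1 * Q.coeff p.2) hmem
    have hco2 : co - main =
        ∑ p ∈ (Finset.HasAntidiagonal.antidiagonal u0).erase (s0, t0), P.coeff p.1 * Q.coeff p.2 := by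
      rw [hco_def, Polynomial.coeff_mul, ← hsplit]
      ring
    rw [hco2]
    refine ltMuSum hv hμ _ _ _ hαt fun p hp => ?_
    have hpmem := Finset.mem_of_mem_erase hp
    have hpne : p ≠ (s0, t0) := Finset.ne_of_mem_erase hp
    have hpu : p.1 + p.2 = u0 := Finset.HasAntidiagonal.mem_antidiagonal.mp hpmem
    rw [hμ.1, ← hpu, add_nsmul, add_add_add_comm]
    rcases lt_trichotomy p.1 s0 with h1 | h1 | h1
    · calc α = μ' (Polynomial.eval φ P) + μ' (Polynomial.eval φ Q) := hα
        _ < (μ (P.coeff p.1) + p.1 • γ) + μ' (Polynomial.eval φ Q) :=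
            WithTop.add_lt_add_right hgt (hs0min _ h1)
        _ ≤ _ := add_le_add_right (muLeCoeff hv hμ haug Q hQ p.2) _
    · exfalso
      have h2 : p.2 = t0 := by omega
      exact hpne (Prod.ext_iff.mpr ⟨h1, h2⟩)
    · have h2 : p.2 < t0 := by omega
      calc α = μ' (Polynomial.eval φ P) + μ' (Polynomial.eval φ Q) := hα
        _ < μ' (Polynomial.eval φ P) + (μ (Q.coeff p.2) + p.2 • γ) :=
            WithTop.add_lt_add_left hft (ht0min _ h2)
        _ ≤ _ := add_le_add_left (muLeCoeff hv hμ haug P hP p.1) _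
  have hmainlt : μ main < μ (co - main) := by
    have h := hrest
    rw [← hβα] at h
    exact (WithTop.add_lt_add_iff_right hu0γ).mp h
  have hcoeq : μ co = μ main := by
    have h : co = main + (co - main) := by ring
    rw [h, muAddEq hv hμ hmainlt]
  have hnd : ¬ MuDvd μ φ co := fun h =>
    notDvdMul hμ hφ hPc0 hQc0 (hP s0) (hQ t0) (muDvdOfClose hv hμ hmainlt hcoeq h)
  have hR : μ (co %ₘ φ) = μ main := by rw [modEq hv hμ hφ hnd, hcoeq]
  have hau0 : μ (a u0) + u0 • γ ≤ α := by
    rcases Nat.eq_zero_or_pos u0 with h0 | hpos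
    · have ha0 : a u0 = co %ₘ φ := by
        simp only [ha_def, h0, if_pos, add_zero, hco_def]
      rw [ha0, hR, hβα]
    · have hune : u0 ≠ 0 := Nat.pos_iff_ne_zero.mp hpos
      have haw : a u0 = co %ₘ φ + (P * Q).coeff (u0 - 1) /ₘ φ := by
        rw [ha_def]
        simp only [← hco_def]
        rw [if_neg hune]
      have hw : u0 = (u0 - 1) + 1 := by omega
      have hDv : α < μ ((P * Q).coeff (u0 - 1) /ₘ φ) + u0 • γ := by
        by_cases hDt : μ ((P * Q).coeff (u0 - 1) /ₘ φ) = ⊤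
        · rw [hDt, top_add]; exact hαt.lt_top
        · have hwγ : ((u0 - 1 : ℕ)) • γ ≠ ⊤ := by
            intro h
            apply hu0γ
            rw [hw, succ_nsmul, h, top_add]
          calc α ≤ μ ((P * Q).coeff (u0 - 1)) + (u0 - 1) • γ :=
                coeffBound hv hμ haug hP hQ _
            _ ≤ (μ φ + μ ((P * Q).coeff (u0 - 1) /ₘ φ)) + (u0 - 1) • γ :=
                add_le_add_left (divBound hv hμ hφ _).1 _
            _ < (γ + μ ((P * Q).coeff (u0 - 1) /ₘ φ)) + (u0 - 1) • γ :=
                WithTop.add_lt_add_right hwγ (WithTop.add_lt_add_right hDt hγ)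
            _ = μ ((P * Q).coeff (u0 - 1) /ₘ φ) + u0 • γ := by
                rw [hw, succ_nsmul]; abel
      have hmainDv : μ main < μ ((P * Q).coeff (u0 - 1) /ₘ φ) := by
        rw [← hβα] at hDv
        exact (WithTop.add_lt_add_iff_right hu0γ).mp hDv
      have hval : μ (a u0) = μ main := by
        rw [haw, muAddEq hv hμ (by rw [hR]; exact hmainDv), hR]
      rw [hval, hβα]
      -- done
  exact le_trans (Finset.inf_le (Finset.mem_range.mpr hu0)) hau0

end Aux6
/-- the augmented mapping `μ' = [μ; φ, γ]` is a valuation on `K[x]`. -/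
theorem augmentation_is_valuation (v : K → WithTop Λ) (μ : Polynomial K → WithTop Λ)
    (hv : IsVal v) (hμ : ExtVal v μ)
    (φ : Polynomial K) (hφ : KeyPoly μ φ)
    (γ : WithTop Λ) (hγ : μ φ < γ)
    (μ' : Polynomial K → WithTop Λ) (haug : AugVal μ φ γ μ') :
    (∀ f g : Polynomial K, μ' (f * g) = μ' f + μ' g) ∧
      (∀ f g : Polynomial K, min (μ' f) (μ' g) ≤ μ' (f + g)) := by
  have hφm := hφ.1
  have hφne : φ ≠ 0 := hφm.ne_zero
  have hdeg : 0 < φ.degree := by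
    by_contra h
    push_neg at h
    have hφ1 : φ = 1 := hφm.degree_le_zero_iff_eq_one.mp h
    refine hφ.2.2.2.1 ⟨1, ?_⟩
    rw [hφ1, mul_one, sub_self, muZero hv hμ, muOne hv hμ]
    exact WithTop.zero_ne_top.lt_top
  constructor
  · intro f g
    obtain ⟨P, hP, hPe⟩ := existsExpansion hφm hdeg f
    obtain ⟨Q, hQ, hQe⟩ := existsExpansion hφm hdeg g
    subst hPe; subst hQe
    have hge := mulGE hv hμ hφ hγ haug hP hQ
    by_cases hft : μ' (Polynomial.eval φ P) = ⊤
    · rw [hft, top_add] at hge ⊢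
      exact top_unique hge
    · by_cases hgt : μ' (Polynomial.eval φ Q) = ⊤
      · rw [hgt, add_top] at hge ⊢
        exact top_unique hge
      · exact le_antisymm (mulLE hv hμ hφ hγ haug hP hQ hft hgt) hge
  · intro f g
    obtain ⟨P, hP, hPe⟩ := existsExpansion hφm hdeg f
    obtain ⟨Q, hQ, hQe⟩ := existsExpansion hφm hdeg g
    subst hPe; subst hQe
    set n := max P.natDegree Q.natDegree + 1 with hn
    have hrep : Polynomial.eval φ P + Polynomial.eval φ Q =
        ∑ s ∈ Finset.range n, (P.coeff s + Q.coeff s) * φ ^ s := by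
      rw [Polynomial.eval_eq_sum_range' (p := P) (n := n) (by omega) φ,
        Polynomial.eval_eq_sum_range' (p := Q) (n := n) (by omega) φ,
        ← Finset.sum_add_distrib]
      exact Finset.sum_congr rfl fun s _ => (add_mul _ _ _).symm
    have hdegs : ∀ s, (P.coeff s + Q.coeff s).degree < φ.degree := fun s =>
      lt_of_le_of_lt (Polynomial.degree_add_le _ _) (max_lt (hP s) (hQ s))
    rw [haug _ n _ hdegs hrep]
    refine Finset.le_inf fun s _ => ?_
    calc min (μ' (Polynomial.eval φ P)) (μ' (Polynomial.eval φ Q))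
        ≤ min (μ (P.coeff s) + s • γ) (μ (Q.coeff s) + s • γ) :=
          min_le_min (muLeCoeff hv hμ haug P hP s) (muLeCoeff hv hμ haug Q hQ s)
      _ = min (μ (P.coeff s)) (μ (Q.coeff s)) + s • γ := min_add_add_right _ _ _
      _ ≤ μ (P.coeff s + Q.coeff s) + s • γ := add_le_add_left (hμ.2.1 _ _) _
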